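/- Let h_1, …, h_n ∈ ℝ^d be pairwise distinct node representations and let φ : {1,…,n} → {1,…,n} be any mapping. Then there exist a hidden dimension d' ∈ ℕ, a weight matrix W ∈ ℝ^{d'×2d}, a bias vector b ∈ ℝ^{d'}, and a vector a ∈ ℝ^{d'} such that the scoring function e(h_i, h_j) = aᵀ · ReLU(W·[h_i ‖ h_j] + b), using the ReLU activation instead of LeakyReLU, satisfies, for every i ∈ {1,…,n} and every j ≠ φ(i), e(h_i, h_{φ(i)}) > e(h_i, h_j). That is, the dynamic-attention property of the GATv2 architecture holds for the ReLU activation as well. -/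

import Mathlib

set_option maxHeartbeats 1000000


open Matrix

/-- ReLU activation. -/
noncomputable def relu (x : ℝ) : ℝ := max x 0

/-- The GATv2-style scoring function with ReLU activation:
`e(q,k) = aᵀ · ReLU(W·[q ‖ k] + b)`. -/
noncomputable def gatv2ReluScore {d d' : ℕ} (W : Matrix (Fin d') (Fin (d + d)) ℝ)
    (b a : Fin d' → ℝ) (q k : Fin d → ℝ) : ℝ :=
  a ⬝ᵥ fun r => relu (W.mulVec (Fin.append q k) r + b r)

/-- A finite set of nonzero vectors admits a functional nonvanishing on all of them. -/
lemma exists_dot_ne_zero {m : ℕ} (D : Finset (Fin m → ℝ)) (hD : ∀ v ∈ D, v ≠ 0) :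
    ∃ u : Fin m → ℝ, ∀ v ∈ D, u ⬝ᵥ v ≠ 0 := by
  classical
  induction D using Finset.induction_on with
  | empty => exact ⟨0, by simp⟩
  | @insert v D hvD ih =>
    obtain ⟨u, hu⟩ := ih (fun w hw => hD w (Finset.mem_insert_of_mem hw))
    have hv : v ≠ 0 := hD v (Finset.mem_insert_self v D)
    set B : Finset ℝ := (insert v D).image (fun w => -(u ⬝ᵥ w) / (v ⬝ᵥ w)) with hB
    obtain ⟨ε, hε⟩ := Infinite.exists_notMem_finset B
    refine ⟨u + ε • v, ?_⟩
    intro w hw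
    have hdot : (u + ε • v) ⬝ᵥ w = u ⬝ᵥ w + ε * (v ⬝ᵥ w) := by
      simp [add_dotProduct, smul_dotProduct, smul_eq_mul]
    rw [hdot]
    by_cases hvw : v ⬝ᵥ w = 0
    · rcases Finset.mem_insert.mp hw with rfl | hwD
      · exact absurd ((dotProduct_self_eq_zero).mp hvw) hv
      · simpa [hvw] using hu w hwD
    · intro hcontra
      have : ε = -(u ⬝ᵥ w) / (v ⬝ᵥ w) := by
        field_simp
        linarith
      exact hε (this ▸ Finset.mem_image_of_mem _ hw)

lemma exists_separating {m : ℕ} {ι : Type*} [Fintype ι] (x : ι → Fin m → ℝ)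
    (hx : Function.Injective x) :
    ∃ u : Fin m → ℝ, Function.Injective (fun p => u ⬝ᵥ x p) := by
  classical
  set D : Finset (Fin m → ℝ) :=
    (Finset.univ.offDiag).image (fun pq : ι × ι => x pq.1 - x pq.2) with hD
  have hDnz : ∀ v ∈ D, v ≠ 0 := by
    intro v hv
    obtain ⟨pq, hpq, rfl⟩ := Finset.mem_image.mp hv
    have hne : pq.1 ≠ pq.2 := (Finset.mem_offDiag.mp hpq).2.2
    exact sub_ne_zero_of_ne (fun hxe => hne (hx hxe))
  obtain ⟨u, hu⟩ := exists_dot_ne_zero D hDnz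
  refine ⟨u, fun p q hpq => ?_⟩
  by_contra hne
  have hmem : x p - x q ∈ D := by
    rw [hD]
    exact Finset.mem_image.mpr ⟨(p, q),
      Finset.mem_offDiag.mpr ⟨Finset.mem_univ _, Finset.mem_univ _, hne⟩, rfl⟩
  have := hu _ hmem
  rw [dotProduct_sub] at this
  exact this (sub_eq_zero_of_eq hpq)

/-- The dynamic-attention property of GATv2 holds with the ReLU activation as well. -/
theorem gatv2_relu_dynamic_attention {d n : ℕ}
    (h : Fin n → Fin d → ℝ) (hdist : Function.Injective h)
    (φ : Fin n → Fin n) :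
    ∃ (d' : ℕ) (W : Matrix (Fin d') (Fin (d + d)) ℝ) (b a : Fin d' → ℝ),
      ∀ i j : Fin n, j ≠ φ i →
        gatv2ReluScore W b a (h i) (h (φ i)) > gatv2ReluScore W b a (h i) (h j) := by
  classical
  by_cases hn : n ≤ 1
  · refine ⟨0, 0, 0, 0, fun i j hj => ?_⟩
    haveI : Subsingleton (Fin n) := by
      rcases Nat.lt_or_ge n 1 with h1 | h1
      · interval_cases n; infer_instance
      · have : n = 1 := le_antisymm hn h1
        subst this; infer_instance
    exact absurd (Subsingleton.elim j (φ i)) hj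
  push_neg at hn
  -- the concatenated pair vectors
  set x : Fin n × Fin n → Fin (d + d) → ℝ := fun p => Fin.append (h p.1) (h p.2) with hx
  have hxinj : Function.Injective x := by
    intro p q hpq
    have h1 : h p.1 = h q.1 := by
      funext c
      have := congrFun hpq (Fin.castAdd d c)
      rw [hx] at this
      simpa only [Fin.append_left] using this
    have h2 : h p.2 = h q.2 := by
      funext c
      have := congrFun hpq (Fin.natAdd d c)
      rw [hx] at this
      simpa only [Fin.append_right] using this
    exact Prod.ext (hdist h1) (hdist h2)
  obtain ⟨u, hu⟩ := exists_separating x hxinj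
  set t : Fin n × Fin n → ℝ := fun p => u ⬝ᵥ x p with ht
  have htinj : Function.Injective t := hu
  -- minimal gap
  set S : Finset ℝ :=
    ((Finset.univ : Finset (Fin n × Fin n)).offDiag).image
      (fun pq => |t pq.1 - t pq.2|) with hS
  have hSne : S.Nonempty := by
    have hn0 : 0 < n := by omega
    have hn1 : 1 < n := by omega
    set i0 : Fin n := ⟨0, hn0⟩
    set i1 : Fin n := ⟨1, hn1⟩
    have h01 : i0 ≠ i1 := by
      intro hcon
      have := congrArg Fin.val hcon
      simp [i0, i1] at this
    refine ⟨|t (i0, i0) - t (i0, i1)|, ?_⟩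
    rw [hS]
    refine Finset.mem_image.mpr ⟨((i0, i0), (i0, i1)), ?_, rfl⟩
    refine Finset.mem_offDiag.mpr ⟨Finset.mem_univ _, Finset.mem_univ _, ?_⟩
    simp only [ne_eq, Prod.mk.injEq]
    tauto
  set δ : ℝ := S.min' hSne with hδdef
  have hδpos : 0 < δ := by
    have hmem : δ ∈ S := S.min'_mem hSne
    rw [hS] at hmem
    obtain ⟨pq, hpq, heq⟩ := Finset.mem_image.mp hmem
    have hne : pq.1 ≠ pq.2 := (Finset.mem_offDiag.mp hpq).2.2
    rw [← heq]
    exact abs_pos.mpr (sub_ne_zero_of_ne (fun hc => hne (htinj hc)))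
  have hδle : ∀ p q : Fin n × Fin n, p ≠ q → δ ≤ |t p - t q| := by
    intro p q hpq
    apply S.min'_le
    rw [hS]
    exact Finset.mem_image.mpr ⟨(p, q),
      Finset.mem_offDiag.mpr ⟨Finset.mem_univ _, Finset.mem_univ _, hpq⟩, rfl⟩
  -- the hat function
  set G : ℝ → ℝ := fun s => (relu (s + δ) - 2 * relu s + relu (s - δ)) / δ with hG
  have hG0 : G 0 = 1 := by
    simp only [hG, relu, zero_add, zero_sub]
    rw [max_eq_left hδpos.le, max_eq_left (le_refl 0), max_eq_right (by linarith)]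
    field_simp
    ring
  have hGfar : ∀ s : ℝ, δ ≤ |s| → G s = 0 := by
    intro s hs
    rcases le_abs.mp hs with hs1 | hs1
    · simp only [hG, relu]
      rw [max_eq_left (by linarith : (0:ℝ) ≤ s + δ), max_eq_left (by linarith : (0:ℝ) ≤ s),
        max_eq_left (by linarith : (0:ℝ) ≤ s - δ), div_eq_zero_iff]
      left; ring
    · simp only [hG, relu]
      rw [max_eq_right (by linarith), max_eq_right (by linarith), max_eq_right (by linarith)]
      simp
  -- centers
  set c : Fin n → ℝ := fun i => t (i, φ i) with hc
  -- build the network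
  set e := finProdFinEquiv (m := n) (n := 3) with he
  set off : Fin 3 → ℝ := ![δ, 0, -δ] with hoff
  set coef : Fin 3 → ℝ := ![1, -2, 1] with hcoef
  refine ⟨n * 3, Matrix.of (fun _ => u),
    fun r => off (e.symm r).2 - c (e.symm r).1,
    fun r => coef (e.symm r).2 / δ, ?_⟩
  have key : ∀ p : Fin n × Fin n,
      gatv2ReluScore (Matrix.of (fun _ => u) : Matrix (Fin (n * 3)) (Fin (d + d)) ℝ)
        (fun r => off (e.symm r).2 - c (e.symm r).1)
        (fun r => coef (e.symm r).2 / δ) (h p.1) (h p.2)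
      = ∑ i' : Fin n, G (t p - c i') := by
    intro p
    unfold gatv2ReluScore
    have hmv : ∀ r : Fin (n * 3),
        (Matrix.of (fun _ => u) : Matrix (Fin (n * 3)) (Fin (d + d)) ℝ).mulVec (Fin.append (h p.1) (h p.2)) r
          = t p := by
      intro r
      simp [Matrix.mulVec, ht, hx, dotProduct]
    rw [dotProduct]
    calc (∑ r : Fin (n * 3), (coef (e.symm r).2 / δ) *
            relu ((Matrix.of (fun _ => u) : Matrix (Fin (n * 3)) (Fin (d + d)) ℝ).mulVec
              (Fin.append (h p.1) (h p.2)) r + (off (e.symm r).2 - c (e.symm r).1)))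
        = ∑ ik : Fin n × Fin 3, (coef ik.2 / δ) * relu (t p + (off ik.2 - c ik.1)) := by
          rw [← Equiv.sum_comp e]
          apply Finset.sum_congr rfl
          intro ik _
          rw [hmv (e ik)]
          simp
      _ = ∑ i' : Fin n, G (t p - c i') := by
          rw [Fintype.sum_prod_type]
          apply Finset.sum_congr rfl
          intro i' _
          rw [Fin.sum_univ_three]
          simp only [hoff, hcoef, hG, Matrix.cons_val_zero, Matrix.cons_val_one,
            Matrix.head_cons, Matrix.cons_val_two, Matrix.tail_cons]
          have : t p + (0 - c i') = t p - c i' := by ring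
          rw [this]
          have h1 : t p + (δ - c i') = (t p - c i') + δ := by ring
          have h2 : t p + (-δ - c i') = (t p - c i') - δ := by ring
          rw [h1, h2]
          ring
  intro i j hj
  rw [key (i, φ i), key (i, j)]
  have hgood : ∑ i' : Fin n, G (t (i, φ i) - c i') = 1 := by
    rw [Finset.sum_eq_single i]
    · simp [hc, hG0]
    · intro i' _ hi'
      apply hGfar
      apply hδle
      simp only [ne_eq, Prod.mk.injEq, hc]
      intro hcon
      exact hi' (hcon.1.symm) |>.elim
    · intro hcon; exact absurd (Finset.mem_univ i) hcon
  have hbad : ∑ i' : Fin n, G (t (i, j) - c i') = 0 := by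
    apply Finset.sum_eq_zero
    intro i' _
    apply hGfar
    apply hδle
    simp only [ne_eq, Prod.mk.injEq, hc]
    rintro ⟨rfl, rfl⟩
    exact hj rfl
  rw [hgood, hbad]
  norm_num
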